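/- Let D = (E, 𝓕) be a vf-safe delta-matroid. Then D is connected if and only if there is no proper nonempty union Y of skew classes of Ω that splits the collection Q₃(D); that is, D is connected if and only if for every set X with ∅ ≠ X ≠ E, letting Y be the union of the skew classes {e, e', e''} with e ∈ X, the collection Q₃(D) is not equal to {B₁ ∪ B₂ : B₁ ∈ {B ∩ Y : B ∈ Q₃(D)}, B₂ ∈ {B ∩ (U − Y) : B ∈ Q₃(D)}}. -/

import Mathlib

noncomputable section
open scoped Classical symmDiff

/-- A set system: a finite ground set `E` together with a collection `Fs` of subsets of
`E`, the feasible sets. -/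
structure SetSystem (α : Type*) where
  E : Finset α
  Fs : Set (Finset α)

namespace SetSystem

variable {α : Type*} [DecidableEq α]

/-- A delta-matroid: a set system whose nonempty collection of feasible sets (subsets of
the ground set) satisfies the symmetric exchange axiom. -/
def IsDeltaMatroid (D : SetSystem α) : Prop :=
  D.Fs.Nonempty ∧ (∀ F ∈ D.Fs, F ⊆ D.E) ∧
    ∀ F₁ ∈ D.Fs, ∀ F₂ ∈ D.Fs, ∀ x ∈ F₁ ∆ F₂, ∃ y ∈ F₁ ∆ F₂, F₁ ∆ ({x, y} : Finset α) ∈ D.Fs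

/-- A delta-matroid is even if all its feasible sets have the same parity of size. -/
def IsEven (D : SetSystem α) : Prop :=
  ∀ F₁ ∈ D.Fs, ∀ F₂ ∈ D.Fs, F₁.card % 2 = F₂.card % 2

/-- `e` is a coloop: it belongs to every feasible set. -/
def IsColoop (D : SetSystem α) (e : α) : Prop := ∀ F ∈ D.Fs, e ∈ F

/-- `e` is a loop: it belongs to no feasible set. -/
def IsLoop (D : SetSystem α) (e : α) : Prop := ∀ F ∈ D.Fs, e ∉ F

/-- The underlying deletion operation: keep the feasible sets avoiding `e`. -/
def del₀ (D : SetSystem α) (e : α) : SetSystem α :=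
  ⟨D.E.erase e, {F | F ∈ D.Fs ∧ e ∉ F}⟩

/-- The underlying contraction operation: remove `e` from the feasible sets containing it. -/
def con₀ (D : SetSystem α) (e : α) : SetSystem α :=
  ⟨D.E.erase e, {F | ∃ G ∈ D.Fs, e ∈ G ∧ F = G.erase e}⟩

/-- Deletion `D∖e`: `del₀` if `e` is not a coloop, and `con₀` (= `D/e`) if `e` is a coloop. -/
def delete (D : SetSystem α) (e : α) : SetSystem α :=
  if D.IsColoop e then D.con₀ e else D.del₀ e

/-- Contraction `D/e`: `con₀` if `e` is not a loop, and `del₀` (= `D∖e`) if `e` is a loop. -/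
def contract (D : SetSystem α) (e : α) : SetSystem α :=
  if D.IsLoop e then D.del₀ e else D.con₀ e

/-- The twist `D*A`: replace each feasible set `F` by `F ∆ A`. -/
def twist (D : SetSystem α) (A : Finset α) : SetSystem α :=
  ⟨D.E, {F | ∃ G ∈ D.Fs, F = G ∆ A}⟩

/-- Loop complementation `D+e`. -/
def lcomp (D : SetSystem α) (e : α) : SetSystem α :=
  ⟨D.E, D.Fs ∆ {F | ∃ G ∈ D.Fs, e ∉ G ∧ F = G ∪ {e}}⟩

/-- Loop complementation `D+A` by a set `A = {a₁, …, aₙ}`, defined as the iterated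
single-element loop complementation `D+a₁+⋯+aₙ` (the result is order-independent). -/
def lcompSet (D : SetSystem α) (A : Finset α) : SetSystem α :=
  A.toList.foldl lcomp D

/-- The operation `D ∗̄ A = D+A*A+A`. -/
def starBar (D : SetSystem α) (A : Finset α) : SetSystem α :=
  ((D.lcompSet A).twist A).lcompSet A

/-- The direct sum of two set systems. -/
def directSum (D₁ D₂ : SetSystem α) : SetSystem α :=
  ⟨D₁.E ∪ D₂.E, {F | ∃ F₁ ∈ D₁.Fs, ∃ F₂ ∈ D₂.Fs, F = F₁ ∪ F₂}⟩

/-- `X` is a separator of `D`: `D = D₁ ⊕ D₂` for set systems `D₁`, `D₂` with ground sets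
`X` and `E − X`. -/
def IsSeparator (D : SetSystem α) (X : Finset α) : Prop :=
  X ⊆ D.E ∧ ∃ D₁ D₂ : SetSystem α, D₁.E = X ∧ D₂.E = D.E \ X ∧
    (∀ F ∈ D₁.Fs, F ⊆ D₁.E) ∧ (∀ F ∈ D₂.Fs, F ⊆ D₂.E) ∧ D = D₁.directSum D₂

/-- `D` is connected: it has no proper separator. -/
def Connected (D : SetSystem α) : Prop :=
  ¬ ∃ X, D.IsSeparator X ∧ X.Nonempty ∧ X ≠ D.E

/-- `D'` is a minor of `D`: it is obtained from `D` by a sequence of single-element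
deletions and contractions. -/
inductive MinorOf : SetSystem α → SetSystem α → Prop
  | refl (D : SetSystem α) : MinorOf D D
  | del {D' D : SetSystem α} (e : α) : MinorOf D' D → e ∈ D'.E → MinorOf (D'.delete e) D
  | con {D' D : SetSystem α} (e : α) : MinorOf D' D → e ∈ D'.E → MinorOf (D'.contract e) D

/-- `D'` is a 3-minor of `D`: it is obtained from `D` by a sequence of single-element
deletions, contractions and twist-contractions `D ↦ (D+e)/e`. -/
inductive Minor3Of : SetSystem α → SetSystem α → Prop
  | refl (D : SetSystem α) : Minor3Of D D
  | del {D' D : SetSystem α} (e : α) : Minor3Of D' D → e ∈ D'.E → Minor3Of (D'.delete e) D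
  | con {D' D : SetSystem α} (e : α) : Minor3Of D' D → e ∈ D'.E → Minor3Of (D'.contract e) D
  | tcon {D' D : SetSystem α} (e : α) : Minor3Of D' D → e ∈ D'.E →
      Minor3Of ((D'.lcomp e).contract e) D

/-- `D` is vf-safe: every set system obtained from `D` by a sequence of twists by single
elements and loop complementations is a delta-matroid. -/
inductive TwistLcompReach : SetSystem α → SetSystem α → Prop
  | refl (D : SetSystem α) : TwistLcompReach D D
  | twist {D' D : SetSystem α} (e : α) : TwistLcompReach D' D → e ∈ D'.E →
      TwistLcompReach (D'.twist {e}) D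
  | lcomp {D' D : SetSystem α} (e : α) : TwistLcompReach D' D → e ∈ D'.E →
      TwistLcompReach (D'.lcomp e) D

/-- A vf-safe delta-matroid. -/
def IsVfSafe (D : SetSystem α) : Prop :=
  ∀ D' : SetSystem α, TwistLcompReach D' D → D'.IsDeltaMatroid

end SetSystem

namespace SetSystem

variable {α : Type*} [DecidableEq α]

/-- We model the ground set `U = E₀ ∪ E₁ ∪ E₂` of the 3-matroid `Q₃(D)` as `E × {0,1,2}`,
with the skew classes `{e, e', e''} = {e} × {0,1,2}` for `e ∈ E`. `q3Select B i` is the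
projection `π(B ∩ Eᵢ)`. -/
def q3Select (B : Finset (α × Fin 3)) (i : Fin 3) : Finset α :=
  (B.filter fun p => p.2 = i).image Prod.fst

/-- `B` is a transversal of `Ω = {{e, e', e''} : e ∈ E}`. -/
def IsQ3Transversal (E : Finset α) (B : Finset (α × Fin 3)) : Prop :=
  B ⊆ E ×ˢ (Finset.univ : Finset (Fin 3)) ∧ ∀ e ∈ E, ∃! i : Fin 3, (e, i) ∈ B

/-- The collection `Q₃(D)`: the transversals `B` of `Ω` such that `π(B ∩ E₁)` is a
feasible set of `D ∗̄ π(B ∩ E₂)`. -/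
def q3 (D : SetSystem α) : Set (Finset (α × Fin 3)) :=
  {B | IsQ3Transversal D.E B ∧ q3Select B 1 ∈ (D.starBar (q3Select B 2)).Fs}

end SetSystem


namespace SetSystem

variable {α : Type*} [DecidableEq α]

def lcompP (e : α) (P : Finset α → Prop) (F : Finset α) : Prop :=
  Xor' (P F) (e ∈ F ∧ P (F.erase e))
def lcompPL (L : List α) (P : Finset α → Prop) : Finset α → Prop :=
  L.foldl (fun P e => lcompP e P) P
def twistP (A : Finset α) (P : Finset α → Prop) (F : Finset α) : Prop := P (F ∆ A)
def sbP (A : Finset α) (P : Finset α → Prop) : Finset α → Prop :=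
  lcompPL A.toList (twistP A (lcompPL A.toList P))

set_option maxHeartbeats 2000000 in
theorem lcompP_comm (e f : α) (P : Finset α → Prop) :
    lcompP e (lcompP f P) = lcompP f (lcompP e P) := by
  rcases eq_or_ne e f with rfl | hef
  · rfl
  funext F
  simp only [lcompP, Finset.mem_erase, Finset.erase_right_comm (s := F) (a := e) (b := f),
    hef, Ne.symm hef, ne_eq, not_false_iff, true_and, Xor', Xor]
  rw [eq_iff_iff]; tauto

theorem lcompPL_perm {L₁ L₂ : List α} (h : L₁.Perm L₂) (P : Finset α → Prop) :
    lcompPL L₁ P = lcompPL L₂ P :=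
  h.foldl_eq' (fun x _ y _ P => by rw [lcompP_comm]) P

theorem mem_lcomp (D : SetSystem α) (e : α) (F : Finset α) :
    F ∈ (D.lcomp e).Fs ↔ lcompP e (· ∈ D.Fs) F := by
  have h2 : (F ∈ {F | ∃ G ∈ D.Fs, e ∉ G ∧ F = G ∪ {e}}) ↔ e ∈ F ∧ F.erase e ∈ D.Fs := by
    constructor
    · rintro ⟨G, hG, heG, rfl⟩
      have : G ∪ {e} = insert e G := by rw [Finset.union_comm, ← Finset.insert_eq]
      rw [this, Finset.erase_insert heG]
      exact ⟨Finset.mem_insert_self e G, hG⟩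
    · rintro ⟨heF, hG⟩
      refine ⟨F.erase e, hG, Finset.notMem_erase e F, ?_⟩
      rw [Finset.union_comm, ← Finset.insert_eq, Finset.insert_erase heF]
  simp only [lcomp, lcompP, Xor', Xor]
  rw [Set.mem_symmDiff, h2]

theorem mem_twist (D : SetSystem α) (A : Finset α) (F : Finset α) :
    F ∈ (D.twist A).Fs ↔ F ∆ A ∈ D.Fs := by
  constructor
  · rintro ⟨G, hG, rfl⟩
    rwa [symmDiff_assoc, symmDiff_self, symmDiff_bot]
  · intro h
    exact ⟨F ∆ A, h, by rw [symmDiff_assoc, symmDiff_self, symmDiff_bot]⟩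

/-- `D`'s feasible sets decompose over `X` according to predicates `P₁, P₂`. -/
def Splits (D : SetSystem α) (X : Finset α) (P₁ P₂ : Finset α → Prop) : Prop :=
  (∀ F, P₁ F → F ⊆ X) ∧ (∀ F, P₂ F → F ∩ X = ∅) ∧
    ∀ F, F ∈ D.Fs ↔ P₁ (F ∩ X) ∧ P₂ (F \ X)

theorem Splits.lcomp_mem {D : SetSystem α} {X : Finset α} {P₁ P₂ : Finset α → Prop}
    (h : D.Splits X P₁ P₂) {e : α} (he : e ∈ X) :
    (D.lcomp e).Splits X (lcompP e P₁) P₂ := by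
  obtain ⟨hb₁, hb₂, hiff⟩ := h
  refine ⟨?_, hb₂, ?_⟩
  · intro F hF
    rcases hF with ⟨hF, -⟩ | ⟨⟨heF, hF⟩, -⟩
    · exact hb₁ F hF
    · intro a ha
      rcases eq_or_ne a e with rfl | hae
      · exact he
      · exact hb₁ _ hF (Finset.mem_erase.2 ⟨hae, ha⟩)
  · intro F
    rw [mem_lcomp]
    have e1 : (F.erase e) ∩ X = (F ∩ X).erase e := by
      ext a; simp [Finset.mem_erase]
    have e2 : (F.erase e) \ X = F \ X := by
      ext a
      simp only [Finset.mem_sdiff, Finset.mem_erase]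
      constructor
      · rintro ⟨⟨-, h⟩, hX⟩; exact ⟨h, hX⟩
      · rintro ⟨h, hX⟩; exact ⟨⟨fun h' => hX (h' ▸ he), h⟩, hX⟩
    have e3 : e ∈ F ↔ e ∈ F ∩ X := by simp [he]
    simp only [lcompP, Xor', Xor, hiff, e1, e2, e3]
    tauto

theorem Splits.lcomp_not_mem {D : SetSystem α} {X : Finset α} {P₁ P₂ : Finset α → Prop}
    (h : D.Splits X P₁ P₂) {e : α} (he : e ∉ X) :
    (D.lcomp e).Splits X P₁ (lcompP e P₂) := by
  obtain ⟨hb₁, hb₂, hiff⟩ := h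
  refine ⟨hb₁, ?_, ?_⟩
  · intro F hF
    rcases hF with ⟨hF, -⟩ | ⟨⟨heF, hF⟩, -⟩
    · exact hb₂ F hF
    · have := hb₂ _ hF
      ext a
      simp only [Finset.mem_inter, Finset.notMem_empty, iff_false, not_and]
      intro haF haX
      rcases eq_or_ne a e with rfl | hae
      · exact he haX
      · have : a ∈ (F.erase e) ∩ X := Finset.mem_inter.2 ⟨Finset.mem_erase.2 ⟨hae, haF⟩, haX⟩
        simp_all
  · intro F
    rw [mem_lcomp]
    have e1 : (F.erase e) ∩ X = F ∩ X := by
      ext a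
      simp only [Finset.mem_inter, Finset.mem_erase]
      constructor
      · rintro ⟨⟨-, h⟩, hX⟩; exact ⟨h, hX⟩
      · rintro ⟨h, hX⟩; exact ⟨⟨fun h' => he (h' ▸ hX), h⟩, hX⟩
    have e2 : (F.erase e) \ X = (F \ X).erase e := by
      ext a; simp [Finset.mem_erase, Finset.mem_sdiff]; tauto
    have e3 : e ∈ F ↔ e ∈ F \ X := by simp [he]
    simp only [lcompP, Xor', Xor, hiff, e1, e2, e3]
    tauto

theorem Splits.twist {D : SetSystem α} {X : Finset α} {P₁ P₂ : Finset α → Prop}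
    (h : D.Splits X P₁ P₂) (A : Finset α) :
    (D.twist A).Splits X (twistP (A ∩ X) P₁) (twistP (A \ X) P₂) := by
  obtain ⟨hb₁, hb₂, hiff⟩ := h
  refine ⟨?_, ?_, ?_⟩
  · intro F hF
    have hsub := hb₁ _ hF
    intro a ha
    by_cases haA : a ∈ A ∩ X
    · exact (Finset.mem_inter.1 haA).2
    · exact hsub (Finset.mem_symmDiff.2 (Or.inl ⟨ha, haA⟩))
  · intro F hF
    have hd := hb₂ _ hF
    ext a
    simp only [Finset.mem_inter, Finset.notMem_empty, iff_false, not_and]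
    intro haF haX
    have haA : a ∉ A \ X := fun h' => (Finset.mem_sdiff.1 h').2 haX
    have : a ∈ (F ∆ (A \ X)) ∩ X :=
      Finset.mem_inter.2 ⟨Finset.mem_symmDiff.2 (Or.inl ⟨haF, haA⟩), haX⟩
    simp_all
  · intro F
    rw [mem_twist, hiff]
    have e1 : (F ∆ A) ∩ X = (F ∩ X) ∆ (A ∩ X) := by
      ext a; simp [Finset.mem_symmDiff]; tauto
    have e2 : (F ∆ A) \ X = (F \ X) ∆ (A \ X) := by
      ext a; simp [Finset.mem_symmDiff]; tauto
    rw [e1, e2]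
    rfl

theorem Splits.foldl {X : Finset α}
    (L : List α) : ∀ {D : SetSystem α} {P₁ P₂ : Finset α → Prop}, D.Splits X P₁ P₂ →
    (L.foldl lcomp D).Splits X (lcompPL (L.filter (· ∈ X)) P₁)
      (lcompPL (L.filter (· ∉ X)) P₂) := by
  induction L with
  | nil => intro D P₁ P₂ h; exact h
  | cons e L ih =>
    intro D P₁ P₂ h
    by_cases he : e ∈ X
    · have h1 := ih (h.lcomp_mem he)
      simp only [List.foldl_cons]
      rw [List.filter_cons_of_pos (by simpa using he), List.filter_cons_of_neg (by simpa using he)]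
      exact h1
    · have h1 := ih (h.lcomp_not_mem he)
      simp only [List.foldl_cons]
      rw [List.filter_cons_of_neg (by simpa using he), List.filter_cons_of_pos (by simpa using he)]
      exact h1

theorem toList_filter_perm (A : Finset α) (p : α → Prop) [DecidablePred p] :
    (A.toList.filter (p ·)).Perm (A.filter p).toList := by
  rw [← Multiset.coe_eq_coe, ← Multiset.filter_coe p, Finset.coe_toList, Finset.coe_toList,
    Finset.filter_val]

theorem lcompPL_toList_filter_mem (A X : Finset α) (P : Finset α → Prop) :
    lcompPL (A.toList.filter (· ∈ X)) P = lcompPL (A ∩ X).toList P := by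
  rw [lcompPL_perm ((toList_filter_perm A (· ∈ X)).trans (by rw [Finset.filter_mem_eq_inter]))]

theorem lcompPL_toList_filter_not_mem (A X : Finset α) (P : Finset α → Prop) :
    lcompPL (A.toList.filter (· ∉ X)) P = lcompPL (A \ X).toList P := by
  have : A.filter (· ∉ X) = A \ X := by
    ext a; simp [Finset.mem_sdiff]
  rw [lcompPL_perm ((toList_filter_perm A (· ∉ X)).trans (by rw [this]))]

theorem Splits.starBar {D : SetSystem α} {X : Finset α} {P₁ P₂ : Finset α → Prop}
    (h : D.Splits X P₁ P₂) (A : Finset α) :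
    (D.starBar A).Splits X (sbP (A ∩ X) P₁) (sbP (A \ X) P₂) := by
  have h1 := Splits.foldl A.toList (Splits.twist (Splits.foldl A.toList h) A)
  unfold SetSystem.starBar SetSystem.lcompSet
  unfold sbP
  simp only [lcompPL_toList_filter_mem, lcompPL_toList_filter_not_mem] at h1
  exact h1


theorem ext' {D₁ D₂ : SetSystem α} (h1 : D₁.E = D₂.E) (h2 : D₁.Fs = D₂.Fs) : D₁ = D₂ := by
  cases D₁; cases D₂; cases h1; cases h2; rfl

theorem mem_q3Select {B : Finset (α × Fin 3)} {i : Fin 3} {a : α} :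
    a ∈ q3Select B i ↔ (a, i) ∈ B := by
  simp only [q3Select, Finset.mem_image, Finset.mem_filter]
  constructor
  · rintro ⟨⟨b, j⟩, ⟨hB, hj⟩, rfl⟩
    cases hj; exact hB
  · intro h; exact ⟨(a, i), ⟨h, rfl⟩, rfl⟩

theorem lcompSet_empty (D : SetSystem α) : D.lcompSet ∅ = D := by
  rw [lcompSet, Finset.toList_empty]
  rfl

theorem mem_starBar_empty (D : SetSystem α) (F : Finset α) :
    F ∈ (D.starBar ∅).Fs ↔ F ∈ D.Fs := by
  rw [starBar, lcompSet_empty, lcompSet_empty, mem_twist, ← Finset.bot_eq_empty, symmDiff_bot]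

/-- The transversal with all elements of `F` at level 1 and the rest of `E` at level 0. -/
def bmk (E F : Finset α) : Finset (α × Fin 3) :=
  (E \ F).image (fun e => (e, (0 : Fin 3))) ∪ F.image (fun e => (e, (1 : Fin 3)))

theorem mem_bmk {E F : Finset α} {a : α} {i : Fin 3} :
    (a, i) ∈ bmk E F ↔ (a ∈ E \ F ∧ i = 0) ∨ (a ∈ F ∧ i = 1) := by
  simp only [bmk, Finset.mem_union, Finset.mem_image, Prod.mk.injEq]
  constructor
  · rintro (⟨b, hb, rfl, rfl⟩ | ⟨b, hb, rfl, rfl⟩)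
    · exact Or.inl ⟨hb, rfl⟩
    · exact Or.inr ⟨hb, rfl⟩
  · rintro (⟨hb, rfl⟩ | ⟨hb, rfl⟩)
    · exact Or.inl ⟨a, hb, rfl, rfl⟩
    · exact Or.inr ⟨a, hb, rfl, rfl⟩

theorem bmk_transversal {E F : Finset α} (hF : F ⊆ E) : IsQ3Transversal E (bmk E F) := by
  constructor
  · rintro ⟨a, i⟩ hp
    rw [mem_bmk] at hp
    rcases hp with ⟨h, -⟩ | ⟨h, -⟩
    · exact Finset.mem_product.2 ⟨(Finset.mem_sdiff.1 h).1, Finset.mem_univ _⟩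
    · exact Finset.mem_product.2 ⟨hF h, Finset.mem_univ _⟩
  · intro e he
    by_cases heF : e ∈ F
    · refine ⟨1, mem_bmk.2 (Or.inr ⟨heF, rfl⟩), ?_⟩
      intro i hi
      rcases mem_bmk.1 hi with ⟨h, rfl⟩ | ⟨-, rfl⟩
      · exact absurd heF (Finset.mem_sdiff.1 h).2
      · rfl
    · refine ⟨0, mem_bmk.2 (Or.inl ⟨Finset.mem_sdiff.2 ⟨he, heF⟩, rfl⟩), ?_⟩
      intro i hi
      rcases mem_bmk.1 hi with ⟨-, rfl⟩ | ⟨h, rfl⟩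
      · rfl
      · exact absurd h heF

theorem q3Select_bmk_one {E F : Finset α} : q3Select (bmk E F) 1 = F := by
  ext a
  rw [mem_q3Select, mem_bmk]
  simp

theorem q3Select_bmk_two {E F : Finset α} : q3Select (bmk E F) 2 = ∅ := by
  ext a
  rw [mem_q3Select, mem_bmk]
  simp [Fin.ext_iff]

theorem bmk_mem_q3 {D : SetSystem α} {F : Finset α} (hF : F ∈ D.Fs) (hFE : F ⊆ D.E) :
    bmk D.E F ∈ D.q3 := by
  refine ⟨bmk_transversal hFE, ?_⟩
  rw [q3Select_bmk_one, q3Select_bmk_two, mem_starBar_empty]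
  exact hF

/-- Membership in the combination of two transversals along `X`. -/
theorem mem_comb {E X : Finset α} {B₁ B₂ : Finset (α × Fin 3)}
    (hB₂ : B₂ ⊆ E ×ˢ (Finset.univ : Finset (Fin 3))) {a : α} {i : Fin 3} :
    (a, i) ∈ (B₁ ∩ X ×ˢ (Finset.univ : Finset (Fin 3)))
        ∪ (B₂ ∩ ((E ×ˢ (Finset.univ : Finset (Fin 3)))
            \ (X ×ˢ (Finset.univ : Finset (Fin 3))))) ↔
      ((a, i) ∈ B₁ ∧ a ∈ X) ∨ ((a, i) ∈ B₂ ∧ a ∈ E ∧ a ∉ X) := by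
  simp only [Finset.mem_union, Finset.mem_inter, Finset.mem_sdiff, Finset.mem_product,
    Finset.mem_univ, and_true]

theorem q3Select_comb {E X : Finset α} {B₁ B₂ : Finset (α × Fin 3)}
    (hB₂ : B₂ ⊆ E ×ˢ (Finset.univ : Finset (Fin 3))) (i : Fin 3) :
    q3Select ((B₁ ∩ X ×ˢ (Finset.univ : Finset (Fin 3)))
        ∪ (B₂ ∩ ((E ×ˢ (Finset.univ : Finset (Fin 3)))
            \ (X ×ˢ (Finset.univ : Finset (Fin 3)))))) i
      = (q3Select B₁ i ∩ X) ∪ (q3Select B₂ i \ X) := by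
  ext a
  rw [mem_q3Select, mem_comb hB₂]
  simp only [Finset.mem_union, Finset.mem_inter, Finset.mem_sdiff, mem_q3Select]
  constructor
  · rintro (⟨h, hX⟩ | ⟨h, -, hX⟩)
    · exact Or.inl ⟨h, hX⟩
    · exact Or.inr ⟨h, hX⟩
  · rintro (⟨h, hX⟩ | ⟨h, hX⟩)
    · exact Or.inl ⟨h, hX⟩
    · have := hB₂ h
      exact Or.inr ⟨h, (Finset.mem_product.1 this).1, hX⟩

theorem comb_transversal {E X : Finset α} {B₁ B₂ : Finset (α × Fin 3)} (hXE : X ⊆ E)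
    (h₁ : IsQ3Transversal E B₁) (h₂ : IsQ3Transversal E B₂) :
    IsQ3Transversal E ((B₁ ∩ X ×ˢ (Finset.univ : Finset (Fin 3)))
        ∪ (B₂ ∩ ((E ×ˢ (Finset.univ : Finset (Fin 3)))
            \ (X ×ˢ (Finset.univ : Finset (Fin 3)))))) := by
  constructor
  · rintro ⟨a, i⟩ hp
    rcases (mem_comb h₂.1).1 hp with ⟨h, hX⟩ | ⟨h, -⟩
    · exact h₁.1 h
    · exact h₂.1 h
  · intro e he
    by_cases heX : e ∈ X
    · obtain ⟨i, hi, hu⟩ := h₁.2 e he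
      refine ⟨i, (mem_comb h₂.1).2 (Or.inl ⟨hi, heX⟩), ?_⟩
      intro j hj
      rcases (mem_comb h₂.1).1 hj with ⟨h, -⟩ | ⟨-, -, h⟩
      · exact hu j h
      · exact absurd heX h
    · obtain ⟨i, hi, hu⟩ := h₂.2 e he
      refine ⟨i, (mem_comb h₂.1).2 (Or.inr ⟨hi, he, heX⟩), ?_⟩
      intro j hj
      rcases (mem_comb h₂.1).1 hj with ⟨-, h⟩ | ⟨h, -, -⟩
      · exact absurd h heX
      · exact hu j h

end SetSystem

/-- A vf-safe delta-matroid `D` is connected if and only if there is no proper nonempty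
union `Y` of skew classes of `Ω` splitting the collection `Q₃(D)`: for every `X` with
`∅ ≠ X ≠ E`, letting `Y` be the union of the skew classes `{e, e', e''}` with `e ∈ X`,
the collection `Q₃(D)` is not equal to
`{B₁ ∪ B₂ : B₁ ∈ {B ∩ Y : B ∈ Q₃(D)}, B₂ ∈ {B ∩ (U − Y) : B ∈ Q₃(D)}}`. -/
theorem connected_iff_q3_not_split {α : Type*} [DecidableEq α]
    (D : SetSystem α) (hD : D.IsDeltaMatroid) (hvf : D.IsVfSafe) :
    D.Connected ↔ ∀ X : Finset α, X ⊆ D.E → X.Nonempty → X ≠ D.E →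
      D.q3 ≠ {C | ∃ B₁ ∈ D.q3, ∃ B₂ ∈ D.q3,
        C = (B₁ ∩ X ×ˢ (Finset.univ : Finset (Fin 3)))
          ∪ (B₂ ∩ ((D.E ×ˢ (Finset.univ : Finset (Fin 3)))
              \ (X ×ˢ (Finset.univ : Finset (Fin 3)))))} := by
  constructor
  · -- Connected → no split
    intro hconn X hXE hXne hXneq heq
    apply hconn
    refine ⟨X, ⟨hXE, ?_⟩, hXne, hXneq⟩
    refine ⟨⟨X, {F | ∃ B ∈ D.q3, SetSystem.q3Select B 2 ∩ X = ∅ ∧ F = SetSystem.q3Select B 1 ∩ X}⟩,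
      ⟨D.E \ X, {F | ∃ B ∈ D.q3, SetSystem.q3Select B 2 \ X = ∅ ∧ F = SetSystem.q3Select B 1 \ X}⟩,
      rfl, rfl, ?_, ?_, ?_⟩
    · rintro F ⟨B, hB, -, rfl⟩
      exact Finset.inter_subset_right
    · rintro F ⟨B, hB, -, rfl⟩
      intro a ha
      rcases Finset.mem_sdiff.1 ha with ⟨h1, h2⟩
      refine Finset.mem_sdiff.2 ⟨?_, h2⟩
      have := hB.1.1 (SetSystem.mem_q3Select.1 h1)
      exact (Finset.mem_product.1 this).1
    · apply SetSystem.ext'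
      · exact (Finset.union_sdiff_of_subset hXE).symm
      · ext F
        simp only [SetSystem.directSum, Set.mem_setOf_eq]
        constructor
        · intro hF
          have hFE := hD.2.1 F hF
          have hB := SetSystem.bmk_mem_q3 hF hFE
          refine ⟨F ∩ X, ⟨SetSystem.bmk D.E F, hB, ?_, ?_⟩,
            F \ X, ⟨SetSystem.bmk D.E F, hB, ?_, ?_⟩, ?_⟩
          · rw [SetSystem.q3Select_bmk_two, Finset.empty_inter]
          · rw [SetSystem.q3Select_bmk_one]
          · rw [SetSystem.q3Select_bmk_two, Finset.empty_sdiff]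
          · rw [SetSystem.q3Select_bmk_one]
          · ext a; simp only [Finset.mem_union, Finset.mem_inter, Finset.mem_sdiff]; tauto
        · rintro ⟨F₁, ⟨B₁, hB₁, hz₁, rfl⟩, F₂, ⟨B₂, hB₂, hz₂, rfl⟩, rfl⟩
          have hC : (B₁ ∩ X ×ˢ (Finset.univ : Finset (Fin 3)))
              ∪ (B₂ ∩ ((D.E ×ˢ (Finset.univ : Finset (Fin 3)))
                  \ (X ×ˢ (Finset.univ : Finset (Fin 3))))) ∈ D.q3 := by
            rw [heq]
            exact ⟨B₁, hB₁, B₂, hB₂, rfl⟩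
          obtain ⟨-, hfeas⟩ := hC
          rw [SetSystem.q3Select_comb hB₂.1.1 2, SetSystem.q3Select_comb hB₂.1.1 1,
            hz₁, hz₂, Finset.union_empty, SetSystem.mem_starBar_empty] at hfeas
          exact hfeas
  · -- no split → Connected
    intro hall
    rintro ⟨X, ⟨hXE, D₁, D₂, hE₁, hE₂, hb₁, hb₂, hsum⟩, hXne, hXneq⟩
    apply hall X hXE hXne hXneq
    have hFs : D.Fs = (D₁.directSum D₂).Fs := by rw [hsum]
    have hsplit : D.Splits X (· ∈ D₁.Fs) (· ∈ D₂.Fs) := by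
      refine ⟨fun F hF => hE₁ ▸ hb₁ F hF, ?_, ?_⟩
      · intro F hF
        have hsub : F ⊆ D.E \ X := hE₂ ▸ hb₂ F hF
        ext a
        simp only [Finset.mem_inter, Finset.notMem_empty, iff_false, not_and]
        intro haF haX
        exact (Finset.mem_sdiff.1 (hsub haF)).2 haX
      · intro F
        rw [hFs]
        simp only [SetSystem.directSum, Set.mem_setOf_eq]
        constructor
        · rintro ⟨F₁, hF₁, F₂, hF₂, rfl⟩
          have hs₁ : F₁ ⊆ X := hE₁ ▸ hb₁ F₁ hF₁
          have hs₂ : F₂ ⊆ D.E \ X := hE₂ ▸ hb₂ F₂ hF₂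
          have e₁ : (F₁ ∪ F₂) ∩ X = F₁ := by
            ext a
            simp only [Finset.mem_inter, Finset.mem_union]
            constructor
            · rintro ⟨h1 | h2, hX⟩
              · exact h1
              · exact absurd hX (Finset.mem_sdiff.1 (hs₂ h2)).2
            · intro h; exact ⟨Or.inl h, hs₁ h⟩
          have e₂ : (F₁ ∪ F₂) \ X = F₂ := by
            ext a
            simp only [Finset.mem_sdiff, Finset.mem_union]
            constructor
            · rintro ⟨h1 | h2, hX⟩
              · exact absurd (hs₁ h1) hX
              · exact h2
            · intro h; exact ⟨Or.inr h, (Finset.mem_sdiff.1 (hs₂ h)).2⟩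
          rw [e₁, e₂]
          exact ⟨hF₁, hF₂⟩
        · rintro ⟨h1, h2⟩
          refine ⟨F ∩ X, h1, F \ X, h2, ?_⟩
          ext a; simp only [Finset.mem_union, Finset.mem_inter, Finset.mem_sdiff]; tauto
    apply Set.eq_of_subset_of_subset
    · intro B hB
      refine ⟨B, hB, B, hB, ?_⟩
      have hsub : B ⊆ D.E ×ˢ (Finset.univ : Finset (Fin 3)) := hB.1.1
      rw [← Finset.inter_union_distrib_left,
        Finset.union_sdiff_of_subset (Finset.product_subset_product hXE (subset_refl _)),
        Finset.inter_eq_left.2 hsub]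
    · rintro C ⟨B₁, hB₁, B₂, hB₂, rfl⟩
      refine ⟨SetSystem.comb_transversal hXE hB₁.1 hB₂.1, ?_⟩
      rw [SetSystem.q3Select_comb hB₂.1.1 1, SetSystem.q3Select_comb hB₂.1.1 2]
      set S₁ := SetSystem.q3Select B₁ 1 ∩ X with hS₁
      set T₂ := SetSystem.q3Select B₂ 1 \ X with hT₂
      set A₁ := SetSystem.q3Select B₁ 2 ∩ X with hA₁
      set C₂ := SetSystem.q3Select B₂ 2 \ X with hC₂
      have key := (hsplit.starBar (A₁ ∪ C₂)).2.2 (S₁ ∪ T₂)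
      rw [key]
      have eA₁ : (A₁ ∪ C₂) ∩ X = A₁ := by
        ext a
        simp only [hA₁, hC₂, Finset.mem_inter, Finset.mem_union, Finset.mem_sdiff]
        tauto
      have eC₂ : (A₁ ∪ C₂) \ X = C₂ := by
        ext a
        simp only [hA₁, hC₂, Finset.mem_inter, Finset.mem_union, Finset.mem_sdiff]
        tauto
      have eS₁ : (S₁ ∪ T₂) ∩ X = S₁ := by
        ext a
        simp only [hS₁, hT₂, Finset.mem_inter, Finset.mem_union, Finset.mem_sdiff]
        tauto
      have eT₂ : (S₁ ∪ T₂) \ X = T₂ := by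
        ext a
        simp only [hS₁, hT₂, Finset.mem_inter, Finset.mem_union, Finset.mem_sdiff]
        tauto
      rw [eA₁, eC₂, eS₁, eT₂]
      constructor
      · have k₁ := ((hsplit.starBar (SetSystem.q3Select B₁ 2)).2.2 (SetSystem.q3Select B₁ 1)).1 hB₁.2
        exact k₁.1
      · have k₂ := ((hsplit.starBar (SetSystem.q3Select B₂ 2)).2.2 (SetSystem.q3Select B₂ 1)).1 hB₂.2
        exact k₂.2
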